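/- If f : 2^S → ℝ≥0 is submodular (f(S_1)+f(S_2) ≥ f(S_1∪S_2)+f(S_1∩S_2) for all S_1,S_2 ⊆ S), then for any subsets S_1,...,S_K of S and any nonempty U ⊆ [K], ∑_{k∈U} f(S_k) ≥ ∑_{r=1}^{|U|} f(S^{(r)}(U)), where S^{(r)}(U) = ⋃_{U'⊆U,|U'|=r} ⋂_{k∈U'} S_k. -/

import Mathlib

open Finset

/-- `cutOp S U r` is `S^{(r)}(U) = ⋃_{U' ⊆ U, |U'| = r} ⋂_{k ∈ U'} S_k`. -/
def cutOp {α : Type*} [Fintype α] [DecidableEq α] (S : ℕ → Finset α) (U : Finset ℕ)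
    (r : ℕ) : Finset α :=
  (U.powersetCard r).sup fun V => V.inf S

section aux
variable {α : Type*} [Fintype α] [DecidableEq α] (S : ℕ → Finset α) (U : Finset ℕ)

lemma cutOp_zero : cutOp S U 0 = Finset.univ := by
  simp [cutOp, Finset.powersetCard_zero, ← Finset.top_eq_univ]

lemma cutOp_antitone (r : ℕ) : cutOp S U (r + 1) ⊆ cutOp S U r := by
  show cutOp S U (r + 1) ≤ cutOp S U r
  apply Finset.sup_le
  intro V hV
  rw [Finset.mem_powersetCard] at hV
  obtain ⟨V', hV'sub, hV'card⟩ := Finset.exists_subset_card_eq (show r ≤ V.card by omega)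
  exact le_trans (Finset.inf_mono hV'sub) (Finset.le_sup (Finset.mem_powersetCard.2 ⟨hV'sub.trans hV.1, hV'card⟩))

lemma cutOp_eq_empty (r : ℕ) (h : U.card < r) : cutOp S U r = ∅ := by
  rw [cutOp, Finset.powersetCard_eq_empty.2 h, Finset.sup_empty, Finset.bot_eq_empty]

lemma cutOp_insert (j : ℕ) (hj : j ∉ U) (r : ℕ) :
    cutOp S (insert j U) (r + 1) = cutOp S U (r + 1) ∪ (S j ∩ cutOp S U r) := by
  rw [cutOp, Finset.powersetCard_succ_insert hj, Finset.sup_union, Finset.sup_image]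
  have : ((fun V => Finset.inf V S) ∘ insert j) = fun V => S j ⊓ V.inf S := by
    funext V; simp only [Function.comp_apply]; by_cases h : j ∈ V
    · rw [Finset.insert_eq_self.2 h]
      exact (Finset.inter_eq_right.2 (Finset.inf_le h)).symm
    · exact Finset.inf_insert
  rw [this, ← Finset.sup_inf_distrib_left]
  rfl
end aux

lemma telescope {α : Type*} [Fintype α] [DecidableEq α]
    (f : Finset α → ℝ) (hf : ∀ A B : Finset α, f A + f B ≥ f (A ∪ B) + f (A ∩ B))
    (B : Finset α) (A : ℕ → Finset α) (hA : ∀ r, A (r + 1) ⊆ A r) :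
    ∀ n, f (B ∩ A 0) + ∑ r ∈ Finset.Icc 1 n, f (A r) ≥
      (∑ r ∈ Finset.Icc 1 n, f (A r ∪ (B ∩ A (r - 1)))) + f (B ∩ A n) := by
  intro n
  induction n with
  | zero => simp
  | succ n ih =>
    rw [Finset.sum_Icc_succ_top (by omega), Finset.sum_Icc_succ_top (by omega)]
    have key : f (B ∩ A n) + f (A (n + 1)) ≥
        f (A (n + 1) ∪ (B ∩ A n)) + f (B ∩ A (n + 1)) := by
      have h2 : A (n + 1) ∩ (B ∩ A n) = B ∩ A (n + 1) := by
        ext x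
        simp only [Finset.mem_inter]
        have := hA n
        constructor
        · rintro ⟨h1, h2, h3⟩; exact ⟨h2, h1⟩
        · rintro ⟨h1, h2⟩; exact ⟨h2, h1, this h2⟩
      have := hf (A (n + 1)) (B ∩ A n)
      rw [h2, Finset.union_comm] at this
      rw [Finset.union_comm]
      linarith
    simp only [Nat.add_sub_cancel]
    linarith

lemma aux_main {α : Type*} [Fintype α] [DecidableEq α]
    (f : Finset α → ℝ)
    (hf : ∀ A B : Finset α, f A + f B ≥ f (A ∪ B) + f (A ∩ B))
    (S : ℕ → Finset α) (U : Finset ℕ) :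
    ∑ k ∈ U, f (S k) ≥ ∑ r ∈ Finset.Icc 1 U.card, f (cutOp S U r) := by
  induction U using Finset.induction_on with
  | empty => simp
  | insert j U hj ih =>
    rw [Finset.sum_insert hj, Finset.card_insert_of_notMem hj]
    set m := U.card with hm
    have htel := telescope f hf (S j) (cutOp S U) (cutOp_antitone S U) (m + 1)
    rw [cutOp_zero, Finset.inter_univ, cutOp_eq_empty S U (m + 1) (by omega),
      Finset.inter_empty, Finset.sum_Icc_succ_top (by omega : 1 ≤ m + 1),
      cutOp_eq_empty S U (m + 1) (by omega)] at htel
    have hsum : ∑ r ∈ Finset.Icc 1 (m + 1), f (cutOp S (insert j U) r) =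
        ∑ r ∈ Finset.Icc 1 (m + 1), f (cutOp S U r ∪ (S j ∩ cutOp S U (r - 1))) := by
      apply Finset.sum_congr rfl
      intro r hr
      rw [Finset.mem_Icc] at hr
      obtain ⟨t, rfl⟩ : ∃ t, r = t + 1 := ⟨r - 1, by omega⟩
      rw [cutOp_insert S U j hj t, Nat.add_sub_cancel]
    rw [hsum]
    linarith


theorem submodular_multiway {α : Type*} [Fintype α] [DecidableEq α] (K : ℕ)
    (f : Finset α → ℝ) (hf0 : ∀ A, 0 ≤ f A)
    (hf : ∀ A B : Finset α, f A + f B ≥ f (A ∪ B) + f (A ∩ B))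
    (S : ℕ → Finset α) (U : Finset ℕ) (hU : U ⊆ Finset.Icc 1 K) (hne : U.Nonempty) :
    ∑ k ∈ U, f (S k) ≥ ∑ r ∈ Finset.Icc 1 U.card, f (cutOp S U r) := by
  exact aux_main f hf S U
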